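/- arXiv:1401.6584 — 3 statements merged into one kernel-verified Lean document; each statement's English description precedes it below -/
import Mathlib

section
/- Let A and B be d×d real symmetric matrices with eigenvalues λ_1(A) ≥ ⋯ ≥ λ_d(A) and λ_1(B) ≥ ⋯ ≥ λ_d(B). Then ∑_{i=1}^d (λ_i(A) - λ_i(B))^2 ≤ ∑_{i,j=1}^d (A_{ij} - B_{ij})^2 (Hoffman–Wielandt inequality). -/
open Matrix Finset

section aux

variable {d : ℕ}

lemma hw_perm_trans (σ : Equiv.Perm (Fin d)) :
    (σ.permMatrix ℝ)ᵀ = σ.symm.toPEquiv.toMatrix := by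
  rw [Equiv.toPEquiv_symm, PEquiv.toMatrix_symm]

lemma hw_perm_orth (σ : Equiv.Perm (Fin d)) :
    σ.permMatrix ℝ * (σ.permMatrix ℝ)ᵀ = 1 ∧ (σ.permMatrix ℝ)ᵀ * σ.permMatrix ℝ = 1 := by
  rw [hw_perm_trans]
  constructor
  · rw [show (σ.permMatrix ℝ : Matrix (Fin d) (Fin d) ℝ) = σ.toPEquiv.toMatrix from rfl,
      ← PEquiv.toMatrix_trans, ← Equiv.toPEquiv_trans, Equiv.self_trans_symm,
      Equiv.toPEquiv_refl, PEquiv.toMatrix_refl]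
  · rw [show (σ.permMatrix ℝ : Matrix (Fin d) (Fin d) ℝ) = σ.toPEquiv.toMatrix from rfl,
      ← PEquiv.toMatrix_trans, ← Equiv.toPEquiv_trans, Equiv.symm_trans_self,
      Equiv.toPEquiv_refl, PEquiv.toMatrix_refl]

lemma hw_perm_diag (σ : Equiv.Perm (Fin d)) (f : Fin d → ℝ) :
    σ.permMatrix ℝ * diagonal f * (σ.permMatrix ℝ)ᵀ = diagonal (f ∘ σ) := by
  rw [hw_perm_trans,
    show (σ.permMatrix ℝ : Matrix (Fin d) (Fin d) ℝ) = σ.toPEquiv.toMatrix from rfl,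
    PEquiv.toMatrix_toPEquiv_mul, PEquiv.mul_toMatrix_toPEquiv, Equiv.symm_symm,
    Matrix.submatrix_submatrix, Function.comp_id, Function.id_comp,
    Matrix.submatrix_diagonal_equiv]

/-- Orthogonal diagonalization with a permuted eigenvalue listing. -/
lemma hw_exists_orth (A : Matrix (Fin d) (Fin d) ℝ) (hA : A.IsHermitian)
    (μ : Fin d → ℝ) (hμ : ∃ σ : Equiv.Perm (Fin d), μ = hA.eigenvalues ∘ σ) :
    ∃ U : Matrix (Fin d) (Fin d) ℝ,
      U * Uᵀ = 1 ∧ Uᵀ * U = 1 ∧ A = U * diagonal μ * Uᵀ := by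
  obtain ⟨σ, rfl⟩ := hμ
  set V : Matrix (Fin d) (Fin d) ℝ := (hA.eigenvectorUnitary : Matrix (Fin d) (Fin d) ℝ)
    with hVdef
  have hV1 : V * Vᵀ = 1 := by
    have := (Matrix.mem_unitaryGroup_iff).mp hA.eigenvectorUnitary.2
    simpa [Matrix.star_eq_conjTranspose, conjTranspose_eq_transpose_of_trivial] using this
  have hV2 : Vᵀ * V = 1 := by
    have := (Matrix.mem_unitaryGroup_iff').mp hA.eigenvectorUnitary.2
    simpa [Matrix.star_eq_conjTranspose, conjTranspose_eq_transpose_of_trivial] using this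
  set P : Matrix (Fin d) (Fin d) ℝ := σ.permMatrix ℝ with hPdef
  obtain ⟨hP1, hP2⟩ := hw_perm_orth σ
  rw [← hPdef] at hP1 hP2
  have hdiag : P * diagonal hA.eigenvalues * Pᵀ = diagonal (hA.eigenvalues ∘ σ) := by
    rw [hPdef]; exact hw_perm_diag σ _
  have hdiag' : Pᵀ * diagonal (hA.eigenvalues ∘ σ) * P = diagonal hA.eigenvalues := by
    rw [← hdiag]
    calc Pᵀ * (P * diagonal hA.eigenvalues * Pᵀ) * P
        = Pᵀ * P * (diagonal hA.eigenvalues * (Pᵀ * P)) := by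
          simp only [Matrix.mul_assoc]
      _ = diagonal hA.eigenvalues := by rw [hP2]; simp
  refine ⟨V * Pᵀ, ?_, ?_, ?_⟩
  · calc V * Pᵀ * (V * Pᵀ)ᵀ = V * (Pᵀ * P) * Vᵀ := by
          simp only [Matrix.transpose_mul, Matrix.transpose_transpose, Matrix.mul_assoc]
    _ = 1 := by rw [hP2]; simp [hV1]
  · calc (V * Pᵀ)ᵀ * (V * Pᵀ) = P * (Vᵀ * V) * Pᵀ := by
          simp only [Matrix.transpose_mul, Matrix.transpose_transpose, Matrix.mul_assoc]
    _ = 1 := by rw [hV2]; simp [hP1]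
  · have hst : A = V * diagonal hA.eigenvalues * Vᵀ := by
      have := hA.spectral_theorem
      simpa [Matrix.star_eq_conjTranspose, conjTranspose_eq_transpose_of_trivial,
        Function.comp, hVdef] using this
    have h3 : V * Pᵀ * diagonal (hA.eigenvalues ∘ σ) * (V * Pᵀ)ᵀ
        = V * (Pᵀ * diagonal (hA.eigenvalues ∘ σ) * P) * Vᵀ := by
      simp only [Matrix.transpose_mul, Matrix.transpose_transpose, Matrix.mul_assoc]
    rw [h3, hdiag']
    exact hst

/-- The LP / rearrangement bound for doubly stochastic matrices. -/
lemma hw_lp (s : Matrix (Fin d) (Fin d) ℝ) (hs : s ∈ doublyStochastic ℝ (Fin d))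
    (μ ν : Fin d → ℝ) (hmono : Monovary μ ν) :
    ∑ i, ∑ j, s i j * (μ i * ν j) ≤ ∑ i, μ i * ν i := by
  obtain ⟨w, hw0, hw1, hws⟩ := exists_eq_sum_perm_of_mem_doublyStochastic hs
  have hperm : ∀ σ : Equiv.Perm (Fin d), ∀ i : Fin d,
      ∑ j, (σ.permMatrix ℝ) i j * (μ i * ν j) = μ i * ν (σ i) := by
    intro σ i
    rw [Finset.sum_eq_single (σ i)]
    · simp [Equiv.Perm.permMatrix, Equiv.toPEquiv_apply]
    · intro j _ hj
      simp [Equiv.Perm.permMatrix, Equiv.toPEquiv_apply, Ne.symm hj]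
    · simp
  have hsij : ∀ i j, s i j = ∑ σ : Equiv.Perm (Fin d), w σ * (σ.permMatrix ℝ) i j := by
    intro i j
    rw [← hws]
    simp [Matrix.sum_apply]
  calc ∑ i, ∑ j, s i j * (μ i * ν j)
      = ∑ i, ∑ σ : Equiv.Perm (Fin d), ∑ j, w σ * ((σ.permMatrix ℝ) i j * (μ i * ν j)) := by
        refine Finset.sum_congr rfl fun i _ => ?_
        rw [Finset.sum_comm]
        refine Finset.sum_congr rfl fun j _ => ?_
        rw [hsij, Finset.sum_mul]
        exact Finset.sum_congr rfl fun σ _ => by ring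
    _ = ∑ σ : Equiv.Perm (Fin d), w σ * ∑ i, μ i * ν (σ i) := by
        rw [Finset.sum_comm]
        refine Finset.sum_congr rfl fun σ _ => ?_
        rw [Finset.mul_sum]
        refine Finset.sum_congr rfl fun i _ => ?_
        rw [← hperm σ i, Finset.mul_sum]
    _ ≤ ∑ σ : Equiv.Perm (Fin d), w σ * ∑ i, μ i * ν i := by
        refine Finset.sum_le_sum fun σ _ => mul_le_mul_of_nonneg_left ?_ (hw0 σ)
        simpa [smul_eq_mul] using hmono.sum_smul_comp_perm_le_sum_smul (σ := σ)
    _ = ∑ i, μ i * ν i := by rw [← Finset.sum_mul, hw1, one_mul]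

end aux

/-- Hoffman–Wielandt inequality: if `A`, `B` are real symmetric `d×d` matrices with eigenvalues
listed in decreasing order `μ` and `ν` respectively, then
`∑ i, (μ i - ν i)^2 ≤ ∑ i j, (A i j - B i j)^2`. -/
theorem hoffman_wielandt
    (d : ℕ) (A B : Matrix (Fin d) (Fin d) ℝ)
    (hA : A.IsHermitian) (hB : B.IsHermitian)
    (μ ν : Fin d → ℝ)
    (hμ : ∃ σ : Equiv.Perm (Fin d), μ = hA.eigenvalues ∘ σ)
    (hν : ∃ σ : Equiv.Perm (Fin d), ν = hB.eigenvalues ∘ σ)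
    (hμmono : Antitone μ) (hνmono : Antitone ν) :
    ∑ i, (μ i - ν i) ^ 2 ≤ ∑ i, ∑ j, (A i j - B i j) ^ 2 := by
  obtain ⟨U, hU1, hU2, hAU⟩ := hw_exists_orth A hA μ hμ
  obtain ⟨V, hV1, hV2, hBV⟩ := hw_exists_orth B hB ν hν
  set W : Matrix (Fin d) (Fin d) ℝ := Uᵀ * V with hW
  have hW1 : W * Wᵀ = 1 := by
    calc W * Wᵀ = Uᵀ * (V * Vᵀ) * U := by simp [hW, Matrix.transpose_mul, Matrix.mul_assoc]
    _ = 1 := by rw [hV1]; simp [hU2]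
  have hW2 : Wᵀ * W = 1 := by
    calc Wᵀ * W = Vᵀ * (U * Uᵀ) * V := by simp [hW, Matrix.transpose_mul, Matrix.mul_assoc]
    _ = 1 := by rw [hU1]; simp [hV2]
  -- the doubly stochastic matrix of squared entries
  set s : Matrix (Fin d) (Fin d) ℝ := fun i j => (W i j) ^ 2 with hs
  have hsmem : s ∈ doublyStochastic ℝ (Fin d) := by
    rw [mem_doublyStochastic_iff_sum]
    refine ⟨fun i j => sq_nonneg _, fun i => ?_, fun j => ?_⟩
    · have := congrFun (congrFun hW1 i) i
      simpa [Matrix.mul_apply, Matrix.one_apply, hs, sq] using this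
    · have := congrFun (congrFun hW2 j) j
      simpa [Matrix.mul_apply, Matrix.one_apply, hs, sq] using this
  -- trace computations
  have hsq : ∀ (U : Matrix (Fin d) (Fin d) ℝ) (f : Fin d → ℝ), Uᵀ * U = 1 →
      trace (U * diagonal f * Uᵀ * (U * diagonal f * Uᵀ)) = ∑ i, f i ^ 2 := by
    intro U f hU
    have h1 : U * diagonal f * Uᵀ * (U * diagonal f * Uᵀ)
        = U * (diagonal f * ((Uᵀ * U) * (diagonal f * Uᵀ))) := by
      simp only [Matrix.mul_assoc]
    rw [h1, hU, Matrix.one_mul, Matrix.trace_mul_comm]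
    have h2 : diagonal f * (diagonal f * Uᵀ) * U = diagonal f * diagonal f * (Uᵀ * U) := by
      simp only [Matrix.mul_assoc]
    rw [h2, hU, Matrix.mul_one, Matrix.diagonal_mul_diagonal, Matrix.trace_diagonal]
    simp [sq]
  have htrA : trace (A * A) = ∑ i, μ i ^ 2 := by
    rw [hAU]; exact hsq U μ hU2
  have htrB : trace (B * B) = ∑ i, ν i ^ 2 := by
    rw [hBV]; exact hsq V ν hV2
  have htrAB : trace (A * B) = ∑ i, ∑ j, s i j * (μ i * ν j) := by
    rw [hAU, hBV]
    have h1 : U * diagonal μ * Uᵀ * (V * diagonal ν * Vᵀ)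
        = U * (diagonal μ * (Uᵀ * (V * (diagonal ν * Vᵀ)))) := by
      simp only [Matrix.mul_assoc]
    rw [h1, Matrix.trace_mul_comm]
    have h2 : diagonal μ * (Uᵀ * (V * (diagonal ν * Vᵀ))) * U
        = diagonal μ * (W * diagonal ν * Wᵀ) := by
      rw [hW]
      simp only [Matrix.transpose_mul, Matrix.transpose_transpose, Matrix.mul_assoc]
    rw [h2, Matrix.trace]
    refine Finset.sum_congr rfl fun i _ => ?_
    rw [Matrix.diag_apply, Matrix.diagonal_mul, Matrix.mul_apply, Finset.mul_sum]
    refine Finset.sum_congr rfl fun j _ => ?_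
    simp only [Matrix.mul_diagonal, Matrix.transpose_apply, hs]
    ring
  -- the Frobenius norm as a trace
  have hfrob : ∑ i, ∑ j, (A i j - B i j) ^ 2 = trace (A * A) - 2 * trace (A * B) + trace (B * B) := by
    have hAB : trace (B * A) = trace (A * B) := Matrix.trace_mul_comm B A
    have hsym : ∀ i j : Fin d, A j i = A i j := fun i j => by
      have := congrFun (congrFun hA j) i
      simpa [Matrix.conjTranspose_apply] using this.symm
    have hsymB : ∀ i j : Fin d, B j i = B i j := fun i j => by
      have := congrFun (congrFun hB j) i
      simpa [Matrix.conjTranspose_apply] using this.symm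
    have expand : ∀ i : Fin d, ((A - B) * (A - B)) i i = ∑ j, (A i j - B i j) ^ 2 := by
      intro i
      rw [Matrix.mul_apply]
      refine Finset.sum_congr rfl fun j _ => ?_
      simp [Matrix.sub_apply, hsym i j, hsymB i j, sq]
    have : trace ((A - B) * (A - B)) = ∑ i, ∑ j, (A i j - B i j) ^ 2 := by
      rw [Matrix.trace]
      exact Finset.sum_congr rfl fun i _ => expand i
    rw [← this]
    have : (A - B) * (A - B) = A * A - A * B - B * A + B * B := by
      noncomm_ring
    rw [this]
    simp only [Matrix.trace_add, Matrix.trace_sub, hAB]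
    ring
  have hlp : ∑ i, ∑ j, s i j * (μ i * ν j) ≤ ∑ i, μ i * ν i :=
    hw_lp s hsmem μ ν (hμmono.monovary hνmono)
  have hlhs : ∑ i, (μ i - ν i) ^ 2 = ∑ i, μ i ^ 2 - 2 * ∑ i, μ i * ν i + ∑ i, ν i ^ 2 := by
    have h : ∀ i : Fin d, (μ i - ν i) ^ 2 = μ i ^ 2 - 2 * (μ i * ν i) + ν i ^ 2 :=
      fun i => by ring
    simp_rw [h]
    rw [Finset.sum_add_distrib, Finset.sum_sub_distrib, Finset.mul_sum]
  rw [hfrob, htrA, htrB, htrAB, hlhs]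
  linarith [hlp]
end

section
/- The integral ∫ over the simplex {μ_1 > ⋯ > μ_d} of ∏_{k<h} (μ_k - μ_h) · |μ_i - μ_j|^{-q} · exp(-∑_{m=1}^d μ_m²/4) dμ is finite for every 0 < q < 2 and every pair i ≠ j. -/
open MeasureTheory

private lemma abs_rpow_le_one_add_sq {x r : ℝ} (hr0 : 0 ≤ r) (hr2 : r ≤ 2) :
    |x| ^ r ≤ (1 + |x|) ^ 2 := by
  rcases eq_or_ne x 0 with rfl | hx
  · simp only [abs_zero, add_zero, one_pow]
    exact Real.zero_rpow_le_one r
  · rcases le_total |x| 1 with h | h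
    · calc |x| ^ r ≤ 1 := Real.rpow_le_one (abs_nonneg x) h hr0
        _ ≤ (1 + |x|) ^ 2 := by nlinarith [abs_nonneg x]
    · calc |x| ^ r ≤ |x| ^ (2:ℝ) := Real.rpow_le_rpow_of_exponent_le h hr2
        _ = |x| ^ (2:ℕ) := by
            rw [show ((2:ℝ) = ((2:ℕ) : ℝ)) by norm_num, Real.rpow_natCast]
        _ ≤ (1 + |x|) ^ 2 := by nlinarith [abs_nonneg x]

private lemma integrable_abs_rpow_mul_exp {r b : ℝ} (hr : -1 < r) (hb : 0 < b) :
    Integrable (fun x : ℝ => |x| ^ r * Real.exp (-b * x ^ 2)) := by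
  have h1 : IntegrableOn (fun x : ℝ => x ^ r * Real.exp (-b * x ^ 2)) (Set.Ioi 0) :=
    integrableOn_rpow_mul_exp_neg_mul_sq hb hr
  have habs : IntegrableOn (fun x : ℝ => |x| ^ r * Real.exp (-b * x ^ 2)) (Set.Ioi 0) := by
    apply h1.congr_fun (fun x hx => ?_) measurableSet_Ioi
    rw [abs_of_pos hx]
  rw [← integrableOn_univ, ← @Set.Iio_union_Ici _ _ (0 : ℝ), integrableOn_union,
    integrableOn_Ici_iff_integrableOn_Ioi]
  refine ⟨?_, habs⟩
  rw [← Measure.map_neg_eq_self (volume : Measure ℝ)]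
  have m : MeasurableEmbedding fun x : ℝ => -x :=
    (Homeomorph.neg ℝ).measurableEmbedding
  rw [m.integrableOn_map_iff]
  simpa only [Function.comp_def, abs_neg, neg_sq, Set.neg_preimage, Set.neg_Iio, neg_zero]
    using habs

private lemma integrable_poly_rpow_gauss (N : ℕ) {r b : ℝ} (hr : -1 < r) (hb : 0 < b) :
    Integrable (fun t : ℝ => (1 + |t|) ^ N * (|t| ^ r * Real.exp (-b * t ^ 2))) := by
  have hNr : (-1:ℝ) < (N:ℝ) + r := by
    have : (0:ℝ) ≤ N := Nat.cast_nonneg N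
    linarith
  have hint : Integrable (fun t : ℝ =>
      (2:ℝ) ^ N * (|t| ^ r * Real.exp (-b * t ^ 2) + |t| ^ ((N:ℝ) + r) * Real.exp (-b * t ^ 2))) :=
    ((integrable_abs_rpow_mul_exp hr hb).add (integrable_abs_rpow_mul_exp hNr hb)).const_mul _
  apply hint.mono'
  · apply Measurable.aestronglyMeasurable
    fun_prop
  · filter_upwards with t
    have hexp : (0:ℝ) < Real.exp (-b * t ^ 2) := Real.exp_pos _
    have hrp : (0:ℝ) ≤ |t| ^ r := Real.rpow_nonneg (abs_nonneg t) r
    have hrp2 : (0:ℝ) ≤ |t| ^ ((N:ℝ) + r) := Real.rpow_nonneg (abs_nonneg t) _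
    have h2N : (1:ℝ) ≤ 2 ^ N := one_le_pow₀ (by norm_num)
    rw [Real.norm_eq_abs, abs_of_nonneg (by positivity)]
    rcases le_total |t| 1 with h | h
    · have h1 : (1 + |t|) ^ N ≤ 2 ^ N := by
        apply pow_le_pow_left₀ (by positivity)
        linarith
      calc (1 + |t|) ^ N * (|t| ^ r * Real.exp (-b * t ^ 2))
          ≤ 2 ^ N * (|t| ^ r * Real.exp (-b * t ^ 2)) :=
            mul_le_mul_of_nonneg_right h1 (by positivity)
        _ ≤ 2 ^ N * (|t| ^ r * Real.exp (-b * t ^ 2) +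
              |t| ^ ((N:ℝ) + r) * Real.exp (-b * t ^ 2)) := by
            apply mul_le_mul_of_nonneg_left _ (by positivity)
            nlinarith
    · have ht : t ≠ 0 := by
        intro h0
        rw [h0] at h
        simp only [abs_zero] at h
        linarith
      have habs : (0:ℝ) < |t| := abs_pos.mpr ht
      have h1 : (1 + |t|) ^ N ≤ 2 ^ N * |t| ^ N := by
        calc (1 + |t|) ^ N ≤ (2 * |t|) ^ N := by
              apply pow_le_pow_left₀ (by positivity)
              linarith
          _ = 2 ^ N * |t| ^ N := mul_pow _ _ _
      have h2 : (|t| : ℝ) ^ N * |t| ^ r = |t| ^ ((N:ℝ) + r) := by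
        rw [← Real.rpow_natCast |t| N, ← Real.rpow_add habs]
      calc (1 + |t|) ^ N * (|t| ^ r * Real.exp (-b * t ^ 2))
          ≤ (2 ^ N * |t| ^ N) * (|t| ^ r * Real.exp (-b * t ^ 2)) :=
            mul_le_mul_of_nonneg_right h1 (by positivity)
        _ = 2 ^ N * (|t| ^ ((N:ℝ) + r) * Real.exp (-b * t ^ 2)) := by
            rw [← h2]; ring
        _ ≤ 2 ^ N * (|t| ^ r * Real.exp (-b * t ^ 2) +
              |t| ^ ((N:ℝ) + r) * Real.exp (-b * t ^ 2)) := by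
            apply mul_le_mul_of_nonneg_left _ (by positivity)
            nlinarith

private theorem vandermonde_aux
    (d : ℕ) (q : ℝ) (hq0 : 0 < q) (hq2 : q < 2) (i j : Fin d) (hlt : i < j) :
    ∫⁻ l in {l : Fin d → ℝ | ∀ k h : Fin d, k < h → l h < l k},
        ENNReal.ofReal
          ((∏ p ∈ Finset.univ.filter (fun p : Fin d × Fin d => p.1 < p.2),
              (l p.1 - l p.2)) *
            |l i - l j| ^ (-q) *
            Real.exp (-∑ m, (l m) ^ 2 / 4)) ∂volume < ⊤ := by
  classical
  have hij : i ≠ j := ne_of_lt hlt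
  set s : ℝ := max (q - 1) (1/2) with hs_def
  have hs_pos : 0 < s := lt_of_lt_of_le (by norm_num) (le_max_right _ _)
  have hs_lt1 : s < 1 := max_lt (by linarith) (by norm_num)
  have hqs : q - 1 ≤ s := le_max_left _ _
  set pairs : Finset (Fin d × Fin d) :=
    Finset.univ.filter (fun p : Fin d × Fin d => p.1 < p.2) with hpairs_def
  have hmem : ((i, j) : Fin d × Fin d) ∈ pairs := by
    simp [hpairs_def, hlt]
  set K : ℕ := pairs.card with hK_def
  set NN : ℕ := 4 * K + 2 with hNN_def
  set T : (Fin d → ℝ) → (Fin d → ℝ) :=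
    ⇑(Matrix.toLin' (Matrix.transvection i j (1:ℝ))) with hT_def
  have hMP : MeasurePreserving T :=
    Real.volume_preserving_transvectionStruct ⟨i, j, hij, 1⟩
  have hTapp : ∀ (y : Fin d → ℝ) (m : Fin d), T y m = y m + if m = i then y j else 0 := by
    intro y m
    simp only [hT_def, Matrix.toLin'_apply, Matrix.transvection, Matrix.add_mulVec,
      Matrix.one_mulVec, Matrix.single_mulVec, Function.update_apply, Pi.add_apply,
      Pi.zero_apply, one_mul]
  have hTi : ∀ y : Fin d → ℝ, T y i = y i + y j := by
    intro y; rw [hTapp]; simp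
  have hTj : ∀ y : Fin d → ℝ, T y j = y j := by
    intro y; rw [hTapp]; simp [hij.symm]
  set F : Fin d → ℝ → ℝ := fun m t =>
    (1 + |t|) ^ NN *
      ((if m = i then |t| ^ (-s) else 1) *
        Real.exp (-(if m = i then (1:ℝ)/16 else 1/8) * t ^ 2)) with hF_def
  have hFint : ∀ m, Integrable (F m) := by
    intro m
    by_cases hm : m = i
    · simp only [hF_def, hm, if_pos rfl]
      exact integrable_poly_rpow_gauss NN (by linarith) (by norm_num)
    · simp only [hF_def, if_neg hm]
      have h := integrable_poly_rpow_gauss NN (r := 0) (b := 1/8) (by norm_num) (by norm_num)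
      simpa only [Real.rpow_zero] using h
  have hGmeas : Measurable (fun l : Fin d → ℝ =>
      ENNReal.ofReal
        ((∏ p ∈ pairs, (l p.1 - l p.2)) * |l i - l j| ^ (-q) *
          Real.exp (-∑ m, (l m) ^ 2 / 4))) := by
    apply Measurable.ennreal_ofReal
    refine Measurable.mul (Measurable.mul ?_ ?_) ?_
    · exact Finset.measurable_prod _ fun p _ =>
        (measurable_pi_apply p.1).sub (measurable_pi_apply p.2)
    · fun_prop
    · fun_prop
  have key : ∀ y : Fin d → ℝ,
      (∏ p ∈ pairs, (T y p.1 - T y p.2)) * |T y i - T y j| ^ (-q) *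
        Real.exp (-∑ m, (T y m) ^ 2 / 4) ≤ ∏ m, F m (y m) := by
    intro y
    set Cy : ℝ := ∏ m, (1 + |y m|) with hCy_def
    have hone : ∀ m : Fin d, (1:ℝ) ≤ 1 + |y m| := fun m => by
      have := abs_nonneg (y m); linarith
    have hprod_ge_one : ∀ t : Finset (Fin d), (1:ℝ) ≤ ∏ m ∈ t, (1 + |y m|) := by
      intro t
      calc (1:ℝ) = ∏ _m ∈ t, 1 := Finset.prod_const_one.symm
        _ ≤ ∏ m ∈ t, (1 + |y m|) :=
          Finset.prod_le_prod (fun m _ => zero_le_one) (fun m _ => hone m)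
    have hCy1 : 1 ≤ Cy := hprod_ge_one Finset.univ
    have hCy0 : 0 ≤ Cy := zero_le_one.trans hCy1
    have hsingle : ∀ m : Fin d, 1 + |y m| ≤ Cy := by
      intro m
      rw [hCy_def, ← Finset.mul_prod_erase Finset.univ _ (Finset.mem_univ m)]
      exact le_mul_of_one_le_right (by positivity) (hprod_ge_one _)
    have hcoord : ∀ m : Fin d, 1 + |T y m| ≤ Cy ^ 2 := by
      intro m
      rw [hTapp]
      by_cases hm : m = i
      · subst hm
        simp only [if_pos rfl]
        calc 1 + |y m + y j| ≤ (1 + |y m|) * (1 + |y j|) := by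
              have h1 := abs_add_le (y m) (y j)
              nlinarith [abs_nonneg (y m), abs_nonneg (y j)]
          _ ≤ Cy * Cy :=
              mul_le_mul (hsingle m) (hsingle j) (by positivity) hCy0
          _ = Cy ^ 2 := (sq Cy).symm
      · simp only [if_neg hm, add_zero]
        exact (hsingle m).trans (le_self_pow₀ hCy1 (by norm_num))
    have hpair : ∀ p : Fin d × Fin d, |T y p.1 - T y p.2| ≤ Cy ^ 4 := by
      intro p
      have h1 := hcoord p.1
      have h2 := hcoord p.2
      have ha1 := abs_nonneg (T y p.1)
      have ha2 := abs_nonneg (T y p.2)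
      have htri : |T y p.1 - T y p.2| ≤ |T y p.1| + |T y p.2| := abs_sub _ _
      calc |T y p.1 - T y p.2| ≤ |T y p.1| + |T y p.2| := htri
        _ ≤ (1 + |T y p.1|) * (1 + |T y p.2|) := by nlinarith
        _ ≤ Cy ^ 2 * Cy ^ 2 := mul_le_mul h1 h2 (by positivity) (by positivity)
        _ = Cy ^ 4 := by ring
    have hVrest : |∏ p ∈ pairs.erase (i, j), (T y p.1 - T y p.2)| ≤ Cy ^ (4 * K) := by
      rw [Finset.abs_prod]
      calc ∏ p ∈ pairs.erase (i, j), |T y p.1 - T y p.2|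
          ≤ ∏ _p ∈ pairs.erase (i, j), Cy ^ 4 :=
            Finset.prod_le_prod (fun p _ => abs_nonneg _) (fun p _ => hpair p)
        _ = (Cy ^ 4) ^ (pairs.erase (i, j)).card := Finset.prod_const _
        _ = Cy ^ (4 * (pairs.erase (i, j)).card) := by rw [← pow_mul]
        _ ≤ Cy ^ (4 * K) := by
            apply pow_le_pow_right₀ hCy1
            exact Nat.mul_le_mul_left 4 Finset.card_erase_le
    have hgap : |y i| * |y i| ^ (-q) ≤ Cy ^ 2 * |y i| ^ (-s) := by
      rcases eq_or_ne (y i) 0 with h0 | h0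
      · rw [h0]
        simp only [abs_zero]
        rw [Real.zero_rpow (by linarith : -q ≠ 0)]
        have h : (0:ℝ) ≤ Cy ^ 2 * (0:ℝ) ^ (-s) := by positivity
        linarith
      · have hpos : 0 < |y i| := abs_pos.mpr h0
        have e1 : |y i| * |y i| ^ (-q) = |y i| ^ (1 - q + s) * |y i| ^ (-s) := by
          rw [← Real.rpow_add hpos (1 - q + s) (-s),
            show (1:ℝ) - q + s + -s = 1 + -q by ring,
            Real.rpow_add hpos 1 (-q), Real.rpow_one]
        rw [e1]
        apply mul_le_mul_of_nonneg_right _ (Real.rpow_nonneg (abs_nonneg _) _)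
        calc |y i| ^ (1 - q + s) ≤ (1 + |y i|) ^ 2 :=
              abs_rpow_le_one_add_sq (by linarith) (by linarith)
          _ ≤ Cy ^ 2 := pow_le_pow_left₀ (by positivity) (hsingle i) 2
    have hexp : Real.exp (-∑ m, (T y m) ^ 2 / 4) ≤
        ∏ m, Real.exp (-(if m = i then (1:ℝ)/16 else 1/8) * y m ^ 2) := by
      rw [← Real.exp_sum]
      apply Real.exp_le_exp.mpr
      have hji : j ∈ Finset.univ.erase i :=
        Finset.mem_erase.mpr ⟨hij.symm, Finset.mem_univ j⟩
      have hsum : ∀ g : Fin d → ℝ, ∑ m, g m =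
          g i + (g j + ∑ m ∈ (Finset.univ.erase i).erase j, g m) := by
        intro g
        rw [← Finset.add_sum_erase _ _ (Finset.mem_univ i), ← Finset.add_sum_erase _ _ hji]
      have h : ∑ m, (if m = i then (1:ℝ)/16 else 1/8) * y m ^ 2 ≤
          ∑ m, (T y m) ^ 2 / 4 := by
        rw [hsum (fun m => (if m = i then (1:ℝ)/16 else 1/8) * y m ^ 2),
          hsum (fun m => (T y m) ^ 2 / 4)]
        have hrest : ∑ m ∈ (Finset.univ.erase i).erase j,
            (if m = i then (1:ℝ)/16 else 1/8) * y m ^ 2 ≤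
            ∑ m ∈ (Finset.univ.erase i).erase j, (T y m) ^ 2 / 4 := by
          apply Finset.sum_le_sum
          intro m hm
          have hmi : m ≠ i := (Finset.mem_erase.mp (Finset.mem_erase.mp hm).2).1
          rw [if_neg hmi, hTapp, if_neg hmi, add_zero]
          nlinarith [sq_nonneg (y m)]
        have hhead : (if i = i then (1:ℝ)/16 else 1/8) * y i ^ 2 +
            (if j = i then (1:ℝ)/16 else 1/8) * y j ^ 2 ≤
            (T y i) ^ 2 / 4 + (T y j) ^ 2 / 4 := by
          rw [if_pos rfl, if_neg hij.symm, hTi, hTj]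
          nlinarith [sq_nonneg (3 * y i + 4 * y j), sq_nonneg (y j)]
        linarith
      have e : ∑ m, -(if m = i then (1:ℝ)/16 else 1/8) * y m ^ 2 =
          -∑ m, (if m = i then (1:ℝ)/16 else 1/8) * y m ^ 2 := by
        rw [← Finset.sum_neg_distrib]
        exact Finset.sum_congr rfl fun m _ => by ring
      rw [e]
      exact neg_le_neg h
    have hgapval : T y i - T y j = y i := by rw [hTi, hTj]; ring
    have hfact : ∏ p ∈ pairs, (T y p.1 - T y p.2) =
        (T y i - T y j) * ∏ p ∈ pairs.erase (i, j), (T y p.1 - T y p.2) := by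
      have h := Finset.mul_prod_erase pairs (fun p => T y p.1 - T y p.2) hmem
      simpa using h.symm
    have hEpos : (0:ℝ) ≤ Real.exp (-∑ m, (T y m) ^ 2 / 4) := (Real.exp_pos _).le
    have hApos : (0:ℝ) ≤ |y i| ^ (-q) := Real.rpow_nonneg (abs_nonneg _) _
    have hprodF : ∏ m, F m (y m) =
        Cy ^ NN * (|y i| ^ (-s) *
          ∏ m, Real.exp (-(if m = i then (1:ℝ)/16 else 1/8) * y m ^ 2)) := by
      simp only [hF_def]
      rw [Finset.prod_mul_distrib, Finset.prod_mul_distrib, Finset.prod_pow]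
      congr 1
      congr 1
      simp [Finset.prod_ite_eq']
    calc (∏ p ∈ pairs, (T y p.1 - T y p.2)) * |T y i - T y j| ^ (-q) *
          Real.exp (-∑ m, (T y m) ^ 2 / 4)
        = (y i * ∏ p ∈ pairs.erase (i, j), (T y p.1 - T y p.2)) * |y i| ^ (-q) *
            Real.exp (-∑ m, (T y m) ^ 2 / 4) := by rw [hfact, hgapval]
      _ ≤ (|y i| * |∏ p ∈ pairs.erase (i, j), (T y p.1 - T y p.2)|) * |y i| ^ (-q) *
            Real.exp (-∑ m, (T y m) ^ 2 / 4) := by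
          apply mul_le_mul_of_nonneg_right _ hEpos
          apply mul_le_mul_of_nonneg_right _ hApos
          calc y i * ∏ p ∈ pairs.erase (i, j), (T y p.1 - T y p.2)
              ≤ |y i * ∏ p ∈ pairs.erase (i, j), (T y p.1 - T y p.2)| := le_abs_self _
            _ = |y i| * |∏ p ∈ pairs.erase (i, j), (T y p.1 - T y p.2)| := abs_mul _ _
      _ = |∏ p ∈ pairs.erase (i, j), (T y p.1 - T y p.2)| * (|y i| * |y i| ^ (-q)) *
            Real.exp (-∑ m, (T y m) ^ 2 / 4) := by ring
      _ ≤ (Cy ^ (4 * K)) * (Cy ^ 2 * |y i| ^ (-s)) *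
            Real.exp (-∑ m, (T y m) ^ 2 / 4) := by
          apply mul_le_mul_of_nonneg_right _ hEpos
          exact mul_le_mul hVrest hgap
            (mul_nonneg (abs_nonneg _) hApos) (by positivity)
      _ ≤ (Cy ^ (4 * K)) * (Cy ^ 2 * |y i| ^ (-s)) *
            ∏ m, Real.exp (-(if m = i then (1:ℝ)/16 else 1/8) * y m ^ 2) := by
          apply mul_le_mul_of_nonneg_left hexp
          have : (0:ℝ) ≤ |y i| ^ (-s) := Real.rpow_nonneg (abs_nonneg _) _
          positivity
      _ = ∏ m, F m (y m) := by
          rw [hprodF, hNN_def, pow_add]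
          ring
  refine lt_of_le_of_lt ?_ ((Integrable.fintype_prod (f := F) hFint).lintegral_lt_top)
  refine le_trans (setLIntegral_le_lintegral _ _) ?_
  rw [← hMP.lintegral_comp hGmeas]
  exact lintegral_mono fun y => ENNReal.ofReal_le_ofReal (key y)

/-- The integral over the ordered simplex `{μ_1 > ⋯ > μ_d}` of
`∏_{k<h}(μ_k - μ_h) · |μ_i - μ_j|^{-q} · exp(-∑ μ_m²/4)` is finite for every `0 < q < 2`
and every pair `i ≠ j`. -/
theorem vandermonde_inverse_gap_integrable
    (d : ℕ) (hd : 2 ≤ d) (q : ℝ) (hq : q ∈ Set.Ioo (0 : ℝ) 2)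
    (i j : Fin d) (hij : i ≠ j) :
    ∫⁻ l in {l : Fin d → ℝ | ∀ k h : Fin d, k < h → l h < l k},
        ENNReal.ofReal
          ((∏ p ∈ Finset.univ.filter (fun p : Fin d × Fin d => p.1 < p.2),
              (l p.1 - l p.2)) *
            |l i - l j| ^ (-q) *
            Real.exp (-∑ m, (l m) ^ 2 / 4)) ∂volume < ⊤ := by
  obtain ⟨hq0, hq2⟩ := hq
  rcases lt_or_gt_of_ne hij with hlt | hlt
  · exact vandermonde_aux d q hq0 hq2 i j hlt
  · have h := vandermonde_aux d q hq0 hq2 j i hlt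
    have e : ∀ l : Fin d → ℝ, |l j - l i| = |l i - l j| := fun l => abs_sub_comm _ _
    simpa only [e] using h
end

section
/- With the same parametrization, the sum of pure second derivatives satisfies ∑_{k ≤ h} ∂²Φ_i/∂b_{kh}² = 2 ∑_{j ≠ i} 1/(λ_i - λ_j), where ∂²Φ_i/∂b_{kh}² = 2∑_{j≠i} |U_{ik}U_{jh} + U_{ih}U_{jk}|²/(λ_i - λ_j) for k < h and 4∑_{j≠i} |U_{ik}U_{jk}|²/(λ_i - λ_j) for k = h. -/
open Matrix

lemma half_sum_aux {d : ℕ} (g : Fin d × Fin d → ℝ)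
    (hg : ∀ p : Fin d × Fin d, g (Prod.swap p) = g p) :
    ∑ p ∈ Finset.univ.filter (fun p : Fin d × Fin d => p.1 ≤ p.2),
      (if p.1 < p.2 then 2 * g p else g p) = ∑ p : Fin d × Fin d, g p := by
  have h1 : ∑ p ∈ Finset.univ.filter (fun p : Fin d × Fin d => p.1 ≤ p.2),
      (if p.1 < p.2 then 2 * g p else g p)
      = (∑ p ∈ Finset.univ.filter (fun p : Fin d × Fin d => p.1 ≤ p.2), g p)
        + ∑ p ∈ Finset.univ.filter (fun p : Fin d × Fin d => p.1 < p.2), g p := by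
    rw [Finset.sum_congr rfl (fun p _ => show (if p.1 < p.2 then 2 * g p else g p)
        = g p + (if p.1 < p.2 then g p else 0) by split <;> ring)]
    rw [Finset.sum_add_distrib]
    congr 1
    rw [← Finset.sum_filter, Finset.filter_filter]
    refine Finset.sum_congr ?_ fun _ _ => rfl
    ext p
    simp only [Finset.mem_filter, Finset.mem_univ, true_and, and_iff_right_iff_imp]
    exact le_of_lt
  have h2 : (∑ p : Fin d × Fin d, g p)
      = (∑ p ∈ Finset.univ.filter (fun p : Fin d × Fin d => p.1 ≤ p.2), g p)
        + ∑ p ∈ Finset.univ.filter (fun p : Fin d × Fin d => ¬ p.1 ≤ p.2), g p :=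
    (Finset.sum_filter_add_sum_filter_not _ _ _).symm
  have h3 : ∑ p ∈ Finset.univ.filter (fun p : Fin d × Fin d => ¬ p.1 ≤ p.2), g p
      = ∑ p ∈ Finset.univ.filter (fun p : Fin d × Fin d => p.1 < p.2), g p := by
    refine Finset.sum_nbij' (fun p => Prod.swap p) (fun p => Prod.swap p) ?_ ?_ ?_ ?_ ?_
    · intro p hp
      simp only [Finset.mem_filter, Finset.mem_univ, true_and] at hp ⊢
      exact lt_of_not_ge hp
    · intro p hp
      simp only [Finset.mem_filter, Finset.mem_univ, true_and] at hp ⊢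
      exact not_le_of_gt hp
    · intro p _; exact Prod.swap_swap p
    · intro p _; exact Prod.swap_swap p
    · intro p _; exact (hg p).symm
  rw [h1, h2, h3]

lemma sum_sq_aux {d : ℕ} (a b : Fin d → ℝ) :
    ∑ p : Fin d × Fin d, (a p.1 * b p.2 + a p.2 * b p.1) ^ 2
      = 2 * (∑ k, a k ^ 2) * (∑ k, b k ^ 2) + 2 * (∑ k, a k * b k) ^ 2 := by
  rw [Fintype.sum_prod_type]
  have : ∀ k, ∑ h, (a k * b h + a h * b k) ^ 2
      = a k ^ 2 * (∑ h, b h ^ 2) + 2 * (a k * b k) * (∑ h, a h * b h)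
        + b k ^ 2 * (∑ h, a h ^ 2) := by
    intro k
    rw [Finset.mul_sum, Finset.mul_sum, Finset.mul_sum, ← Finset.sum_add_distrib,
      ← Finset.sum_add_distrib]
    exact Finset.sum_congr rfl fun h _ => by ring
  rw [Finset.sum_congr rfl fun k _ => this k]
  rw [Finset.sum_add_distrib, Finset.sum_add_distrib, ← Finset.sum_mul, ← Finset.sum_mul,
    ← Finset.sum_mul]
  have h5 : ∑ x : Fin d, 2 * (a x * b x) = 2 * ∑ x, a x * b x := by
    rw [Finset.mul_sum]
  rw [h5]; ring

/-- With the same parametrization, the sum of pure second derivatives of the eigenvalue map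
satisfies `∑_{k≤h} ∂²Φ_i/∂b_{kh}² = 2 ∑_{j≠i} 1/(λ_i - λ_j)`, where
`∂²Φ_i/∂b_{kh}² = 2∑_{j≠i} |U_{ik}U_{jh}+U_{ih}U_{jk}|²/(λ_i-λ_j)` for `k<h` and
`4∑_{j≠i} |U_{ik}U_{jk}|²/(λ_i-λ_j)` for `k = h`. -/
theorem eigenvalue_laplacian_identity
    (d : ℕ) (U : Matrix (Fin d) (Fin d) ℝ) (horth : U * Uᵀ = 1)
    (lam : Fin d → ℝ) (hdistinct : Function.Injective lam) (i : Fin d) :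
    ∑ p ∈ Finset.univ.filter (fun p : Fin d × Fin d => p.1 ≤ p.2),
        (if p.1 < p.2 then
            2 * ∑ j ∈ Finset.univ.erase i,
              (U i p.1 * U j p.2 + U i p.2 * U j p.1) ^ 2 / (lam i - lam j)
          else
            4 * ∑ j ∈ Finset.univ.erase i,
              (U i p.1 * U j p.1) ^ 2 / (lam i - lam j))
      = 2 * ∑ j ∈ Finset.univ.erase i, 1 / (lam i - lam j) := by
  have key : ∀ j, ∑ k, U i k * U j k = if i = j then 1 else 0 := by
    intro j
    have := congrFun (congrFun horth i) j
    simpa [Matrix.mul_apply, Matrix.transpose_apply, Matrix.one_apply] using this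
  set g : Fin d × Fin d → ℝ := fun p =>
    ∑ j ∈ Finset.univ.erase i,
      (U i p.1 * U j p.2 + U i p.2 * U j p.1) ^ 2 / (lam i - lam j) with hgdef
  have hstep : ∀ p ∈ Finset.univ.filter (fun p : Fin d × Fin d => p.1 ≤ p.2),
      (if p.1 < p.2 then
          2 * ∑ j ∈ Finset.univ.erase i,
            (U i p.1 * U j p.2 + U i p.2 * U j p.1) ^ 2 / (lam i - lam j)
        else
          4 * ∑ j ∈ Finset.univ.erase i,
            (U i p.1 * U j p.1) ^ 2 / (lam i - lam j))
      = (if p.1 < p.2 then 2 * g p else g p) := by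
    intro p hp
    simp only [Finset.mem_filter, Finset.mem_univ, true_and] at hp
    split
    · rfl
    · have hpe : p.1 = p.2 := le_antisymm hp (le_of_not_gt (by assumption))
      rw [hgdef]
      simp only [← hpe, Finset.mul_sum]
      exact Finset.sum_congr rfl fun j _ => by ring
  rw [Finset.sum_congr rfl hstep]
  rw [half_sum_aux g (fun p => by
    simp only [hgdef, Prod.fst_swap, Prod.snd_swap]
    exact Finset.sum_congr rfl fun j _ => by ring)]
  have hswap : (∑ p : Fin d × Fin d, g p)
      = ∑ j ∈ Finset.univ.erase i,
          (∑ p : Fin d × Fin d, (U i p.1 * U j p.2 + U i p.2 * U j p.1) ^ 2)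
            / (lam i - lam j) := by
    rw [hgdef, Finset.sum_comm]
    exact Finset.sum_congr rfl fun j _ => (Finset.sum_div _ _ _).symm
  rw [hswap, Finset.mul_sum]
  refine Finset.sum_congr rfl fun j hj => ?_
  have hji : i ≠ j := fun h => (Finset.mem_erase.mp hj).1 h.symm
  rw [sum_sq_aux (U i) (U j)]
  have h1 : ∑ k, U i k * U i k = 1 := by simpa using key i
  have h2 : ∑ k, U i k * U j k = 0 := by simpa [hji] using key j
  have h3 : ∑ k, U i k ^ 2 = 1 := by
    rw [← h1]; exact Finset.sum_congr rfl fun k _ => sq (U i k) ▸ (sq (U i k)).symm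
  have h4 : ∑ k, U j k ^ 2 = 1 := by
    have := congrFun (congrFun horth j) j
    simp [Matrix.mul_apply, Matrix.transpose_apply, Matrix.one_apply] at this
    rw [← this]; exact Finset.sum_congr rfl fun k _ => sq (U j k)
  rw [h3, h4, h2]
  ring
end
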